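/- Let m be an odd positive integer, s = (m+1)/2, and let x^{B_1},...,x^{B_m} be pairwise coprime monomials in k[x_1,...,x_n]. Define C_i as the exponent vector of the product ∏_{k=1}^{s-1} x^{B_{ν(i+k)}}, where ν(j) ∈ {1,...,m} with j ≡ ν(j) mod m, and let I = ⟨x^{C_1},...,x^{C_m}⟩. Then each x^{C_i} is a minimal monomial generator of the integral closure Ī; in particular μ(I) ≤ μ(Ī). -/

import Mathlib

open MvPolynomial

variable {k : Type} [Field k] {n : ℕ}

lemma mod_two_cases (a m : ℕ) (hm : 0 < m) (h : a < 2*m) :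
    (a % m = a ∧ a < m) ∨ (a % m = a - m ∧ m ≤ a) := by
  rcases lt_or_ge a m with h1 | h1
  · exact Or.inl ⟨Nat.mod_eq_of_lt h1, h1⟩
  · refine Or.inr ⟨?_, h1⟩
    rw [Nat.mod_eq_sub_mod h1, Nat.mod_eq_of_lt (by omega)]

lemma arc_eq (m k' : ℕ) (hm : m = 2*k'+1) (j i0 : ℕ) (hj : j < m) (hi0 : i0 < m)
    (H : ∀ l, 1 ≤ l → l ≤ k' → ∃ l', 1 ≤ l' ∧ l' ≤ k' ∧ (j + l) % m = (i0 + l') % m) :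
    j = i0 := by
  rcases Nat.eq_zero_or_pos k' with hk | hk
  · omega
  by_contra hne
  rcases le_or_gt i0 j with hge | hlt
  · set d := j - i0 with hd
    rcases le_or_gt d k' with hdk | hdk
    · obtain ⟨l', h1, h2, heq⟩ := H (k'+1-d) (by omega) (by omega)
      have e1 := mod_two_cases (j + (k'+1-d)) m (by omega) (by omega)
      have e2 := mod_two_cases (i0 + l') m (by omega) (by omega)
      omega
    · obtain ⟨l', h1, h2, heq⟩ := H 1 (by omega) (by omega)
      have e1 := mod_two_cases (j + 1) m (by omega) (by omega)
      have e2 := mod_two_cases (i0 + l') m (by omega) (by omega)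
      omega
  · set d := i0 - j with hd
    rcases le_or_gt d k' with hdk | hdk
    · obtain ⟨l', h1, h2, heq⟩ := H 1 (by omega) (by omega)
      have e1 := mod_two_cases (j + 1) m (by omega) (by omega)
      have e2 := mod_two_cases (i0 + l') m (by omega) (by omega)
      omega
    · obtain ⟨l', h1, h2, heq⟩ := H (d - k') (by omega) (by omega)
      have e1 := mod_two_cases (j + (d - k')) m (by omega) (by omega)
      have e2 := mod_two_cases (i0 + l') m (by omega) (by omega)
      omega

lemma coeff_mul_split {f g : MvPolynomial (Fin n) k} {D : Fin n →₀ ℕ}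
    (h : coeff D (f * g) ≠ 0) :
    ∃ D1 D2, D1 + D2 = D ∧ coeff D1 f ≠ 0 ∧ coeff D2 g ≠ 0 := by
  classical
  rw [coeff_mul] at h
  obtain ⟨p, hp, hne⟩ := Finset.exists_ne_zero_of_sum_ne_zero h
  exact ⟨p.1, p.2, Finset.HasAntidiagonal.mem_antidiagonal.mp hp,
    fun h0 => hne (by rw [h0, zero_mul]), fun h0 => hne (by rw [h0, mul_zero])⟩

lemma span_coeff {m : ℕ} (C : Fin m → (Fin n →₀ ℕ)) {f : MvPolynomial (Fin n) k}
    (hf : f ∈ Ideal.span (Set.range fun i => monomial (C i) (1 : k)))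
    {D : Fin n →₀ ℕ} (hD : coeff D f ≠ 0) : ∃ j, C j ≤ D := by
  classical
  induction hf using Submodule.span_induction generalizing D with
  | mem x hx =>
    obtain ⟨j, rfl⟩ := hx
    rw [coeff_monomial] at hD
    split at hD
    · exact ⟨j, le_of_eq (by assumption)⟩
    · exact absurd rfl hD
  | zero => simp at hD
  | add x y hx hy ihx ihy =>
    rw [coeff_add] at hD
    rcases (by by_contra hc; push_neg at hc; rw [hc.1, hc.2, add_zero] at hD; exact hD rfl :
      coeff D x ≠ 0 ∨ coeff D y ≠ 0) with h | h
    · exact ihx h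
    · exact ihy h
  | smul c x hx ih =>
    rw [smul_eq_mul] at hD
    obtain ⟨D1, D2, hDsum, _, h2⟩ := coeff_mul_split hD
    obtain ⟨j, hj⟩ := ih h2
    exact ⟨j, hj.trans (by rw [← hDsum]; exact le_add_self)⟩

lemma pow_coeff {m : ℕ} (C : Fin m → (Fin n →₀ ℕ)) :
    ∀ (i : ℕ) {f : MvPolynomial (Fin n) k},
      f ∈ (Ideal.span (Set.range fun i => monomial (C i) (1 : k))) ^ i →
      ∀ {D : Fin n →₀ ℕ}, coeff D f ≠ 0 →
      ∃ T : Multiset (Fin m), Multiset.card T = i ∧ (T.map C).sum ≤ D := by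
  intro i
  induction i with
  | zero => intro f _ D hD; exact ⟨0, rfl, by simp⟩
  | succ i ih =>
    intro f hf
    rw [pow_succ] at hf
    refine Submodule.mul_induction_on
      (C := fun f => ∀ {D : Fin n →₀ ℕ}, coeff D f ≠ 0 →
        ∃ T : Multiset (Fin m), Multiset.card T = i + 1 ∧ (T.map C).sum ≤ D) hf ?_ ?_
    · intro g hg h hh D hD
      obtain ⟨D1, D2, hDsum, h1, h2⟩ := coeff_mul_split hD
      obtain ⟨T, hcard, hTle⟩ := ih hg h1
      obtain ⟨j, hj⟩ := span_coeff C hh h2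
      refine ⟨j ::ₘ T, by simp [hcard], ?_⟩
      rw [Multiset.map_cons, Multiset.sum_cons, ← hDsum]
      rw [add_comm D1 D2]
      exact add_le_add hj hTle
    · intro x y ihx ihy D hD
      rw [coeff_add] at hD
      rcases (by by_contra hc; push_neg at hc; rw [hc.1, hc.2, add_zero] at hD; exact hD rfl :
        coeff D x ≠ 0 ∨ coeff D y ≠ 0) with h | h
      · exact ihx h
      · exact ihy h


/-- An ideal of `k[x₁,…,xₙ]` is a *monomial ideal* if it is generated by monomials. -/
def IsMonomialIdeal (I : Ideal (MvPolynomial (Fin n) k)) : Prop :=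
  ∃ G : Set (Fin n →₀ ℕ), I = Ideal.span ((fun A => (monomial A (1 : k))) '' G)

/-- The integral closure of an ideal `I`, as a set: all elements `f` satisfying an
equation `f^r + a₁ f^{r-1} + ⋯ + a_r = 0` with `aᵢ ∈ Iⁱ`. -/
def intCl (I : Ideal (MvPolynomial (Fin n) k)) : Set (MvPolynomial (Fin n) k) :=
  {f | ∃ r : ℕ, 0 < r ∧ ∃ a : ℕ → MvPolynomial (Fin n) k,
    (∀ i, 1 ≤ i → i ≤ r → a i ∈ I ^ i) ∧
    f ^ r + ∑ i ∈ Finset.Icc 1 r, a i * f ^ (r - i) = 0}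

/-- The exponent vectors of the minimal monomial generators of a set `T` of polynomials:
those `A` with `x^A ∈ T` minimal in the componentwise (divisibility) order. -/
def minExps (T : Set (MvPolynomial (Fin n) k)) : Set (Fin n →₀ ℕ) :=
  {A | monomial A (1 : k) ∈ T ∧
    ∀ B : Fin n →₀ ℕ, monomial B (1 : k) ∈ T → B ≤ A → B = A}

/-- **Kamoi's description; height-3 Gorenstein monomial ideals.**
Let `m` be odd, `s = (m+1)/2`, `x^{B 1}, …, x^{B m}` pairwise coprime (nonconstant)
monomials, and `C i` the exponent of `∏_{l=1}^{s-1} x^{B ν(i+l)}` where `ν` reduces mod `m`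
into `{1,…,m}` (here: indices of `Fin m`, reduction `(i + l) % m`). If
`I = ⟨x^{C 1}, …, x^{C m}⟩`, then each `x^{C i}` is a minimal monomial generator of the
integral closure `Ī`; in particular `μ(I) ≤ μ(Ī)`. -/
theorem gorenstein_minGens_minExps_intCl (m : ℕ) (hm : 0 < m) (hodd : Odd m)
    (s : ℕ) (hs : s = (m + 1) / 2)
    (B : Fin m → (Fin n →₀ ℕ)) (hB0 : ∀ i, B i ≠ 0)
    (hcop : Pairwise fun i j => Disjoint (B i).support (B j).support)
    (C : Fin m → (Fin n →₀ ℕ))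
    (hC : ∀ i : Fin m,
      C i = ∑ l ∈ Finset.Icc 1 (s - 1), B ⟨((i : ℕ) + l) % m, Nat.mod_lt _ hm⟩)
    (I : Ideal (MvPolynomial (Fin n) k))
    (hI : I = Ideal.span (Set.range fun i => monomial (C i) (1 : k))) :
    (∀ i, C i ∈ minExps (intCl I)) ∧
      (minExps (I : Set (MvPolynomial (Fin n) k))).ncard ≤ (minExps (intCl I)).ncard := by
  classical
  -- minimality of each C i0 among monomials in the integral closure
  have hmin : ∀ (i0 : Fin m) (A : Fin n →₀ ℕ),
      monomial A (1 : k) ∈ intCl I → A ≤ C i0 → A = C i0 := by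
    intro i0 A hA hle
    rcases Nat.eq_zero_or_pos (s - 1) with hk0 | hk1
    · have hC0 : C i0 = 0 := by
        rw [hC i0, hk0]
        simp
      rw [hC0] at hle ⊢
      ext x
      have := (Finsupp.le_def.mp hle) x
      simpa using this
    · set k' := s - 1 with hk'
      have hm2 : m = 2 * k' + 1 := by
        obtain ⟨t, ht⟩ := hodd
        omega
      obtain ⟨r, hr, a, ha, heq⟩ := hA
      have hfr : (monomial A (1 : k)) ^ r = monomial (r • A) 1 := by
        rw [monomial_pow, one_pow]
      have hc1 : coeff (r • A)
          (∑ i ∈ Finset.Icc 1 r, a i * (monomial A (1 : k)) ^ (r - i)) ≠ 0 := by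
        have hcc := congrArg (coeff (r • A)) heq
        rw [coeff_add, coeff_zero, hfr, coeff_monomial, if_pos rfl] at hcc
        intro h0
        rw [h0] at hcc
        simpa using hcc
      rw [coeff_sum] at hc1
      obtain ⟨i, hiIcc, hi⟩ := Finset.exists_ne_zero_of_sum_ne_zero hc1
      rw [Finset.mem_Icc] at hiIcc
      rw [monomial_pow, one_pow] at hi
      obtain ⟨D1, D2, hsum, h1, h2⟩ := coeff_mul_split hi
      have hD2 : D2 = (r - i) • A := by
        rw [coeff_monomial] at h2
        split at h2
        · exact (by assumption : (r - i) • A = D2).symm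
        · exact absurd rfl h2
      have hD1 : D1 = i • A := by
        have hcan : D1 + D2 = i • A + D2 := by
          rw [hsum, hD2, ← add_smul]
          congr 1
          omega
        exact add_right_cancel hcan
      have hai : a i ∈ I ^ i := ha i hiIcc.1 hiIcc.2
      rw [hI] at hai
      obtain ⟨T, hTcard, hTle⟩ := pow_coeff C i hai (hD1 ▸ h1)
      have hall : ∀ j ∈ T, j = i0 := by
        intro j hj
        have Hj : ∀ l, 1 ≤ l → l ≤ k' → ∃ l', 1 ≤ l' ∧ l' ≤ k' ∧
            ((j : ℕ) + l) % m = ((i0 : ℕ) + l') % m := by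
          intro l hl1 hl2
          by_contra hno
          push_neg at hno
          set t : Fin m := ⟨((j : ℕ) + l) % m, Nat.mod_lt _ hm⟩ with htdef
          have hBt : B t ≤ C j := by
            rw [hC j]
            exact Finset.single_le_sum
              (f := fun l => B ⟨((j : ℕ) + l) % m, Nat.mod_lt _ hm⟩)
              (fun _ _ => zero_le) (Finset.mem_Icc.mpr ⟨hl1, hl2⟩)
          have hCj : C j ≤ (T.map C).sum := by
            obtain ⟨T', rfl⟩ := Multiset.exists_cons_of_mem hj
            rw [Multiset.map_cons, Multiset.sum_cons]
            exact le_self_add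
          obtain ⟨x, hx⟩ := Finsupp.support_nonempty_iff.mpr (hB0 t)
          have hx1 : 1 ≤ B t x := Nat.one_le_iff_ne_zero.mpr (Finsupp.mem_support_iff.mp hx)
          have hC0 : C i0 x = 0 := by
            rw [hC i0, Finsupp.finset_sum_apply]
            refine Finset.sum_eq_zero ?_
            intro l' hl'
            rw [Finset.mem_Icc] at hl'
            have hnet : t ≠ (⟨((i0 : ℕ) + l') % m, Nat.mod_lt _ hm⟩ : Fin m) := by
              intro hteq
              exact hno l' hl'.1 hl'.2 (congrArg Fin.val hteq)
            have hdisj := hcop hnet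
            exact Finsupp.notMem_support_iff.mp (Finset.disjoint_left.mp hdisj hx)
          have c1 : B t x ≤ ((T.map C).sum) x := (Finsupp.le_def.mp (hBt.trans hCj)) x
          have c2 : ((T.map C).sum) x ≤ (i • A) x := (Finsupp.le_def.mp hTle) x
          have c3 : (i • A) x ≤ i * C i0 x := by
            rw [Finsupp.smul_apply, smul_eq_mul]
            exact Nat.mul_le_mul_left _ ((Finsupp.le_def.mp hle) x)
          rw [hC0, Nat.mul_zero] at c3
          omega
        exact Fin.ext (arc_eq m k' hm2 (j : ℕ) (i0 : ℕ) j.isLt i0.isLt Hj)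
      have hrep : T.map C = Multiset.replicate i (C i0) := by
        refine Multiset.eq_replicate.mpr ⟨by simp [hTcard], ?_⟩
        intro b hb
        obtain ⟨j, hj, rfl⟩ := Multiset.mem_map.mp hb
        rw [hall j hj]
      rw [hrep, Multiset.sum_replicate] at hTle
      ext x
      have l1 := (Finsupp.le_def.mp hTle) x
      have l2 := (Finsupp.le_def.mp hle) x
      rw [Finsupp.smul_apply, Finsupp.smul_apply, smul_eq_mul, smul_eq_mul] at l1
      have hi1 : 1 ≤ i := hiIcc.1
      exact Nat.le_antisymm l2 (Nat.le_of_mul_le_mul_left l1 (by omega))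
  have hmemI : ∀ i0 : Fin m, monomial (C i0) (1 : k) ∈ I := by
    intro i0
    rw [hI]
    exact Ideal.subset_span ⟨i0, rfl⟩
  have hIsub : ∀ f : MvPolynomial (Fin n) k, f ∈ I → f ∈ intCl I := by
    intro f hf
    refine ⟨1, one_pos, fun _ => -f, ?_, ?_⟩
    · intro i h1 h2
      have hieq : i = 1 := le_antisymm h2 h1
      rw [hieq, pow_one]
      exact neg_mem hf
    · rw [Finset.Icc_self, Finset.sum_singleton, pow_one, Nat.sub_self, pow_zero, mul_one]
      ring
  have part1 : ∀ i0, C i0 ∈ minExps (intCl I) :=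
    fun i0 => ⟨hIsub _ (hmemI i0), fun B' hB' hle' => hmin i0 B' hB' hle'⟩
  refine ⟨part1, ?_⟩
  have hsub : minExps (I : Set (MvPolynomial (Fin n) k)) ⊆ minExps (intCl I) := by
    intro A hA
    obtain ⟨hAmem, hAmin⟩ := hA
    have hco : coeff A (monomial A (1 : k)) ≠ 0 := by
      rw [coeff_monomial, if_pos rfl]
      exact one_ne_zero
    have hmem' : monomial A (1 : k) ∈ Ideal.span (Set.range fun i => monomial (C i) (1 : k)) := by
      rw [← hI]
      exact hAmem
    obtain ⟨j, hj⟩ := span_coeff C hmem' hco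
    have hAeq : C j = A := hAmin (C j) (hmemI j) hj
    exact hAeq ▸ part1 j
  have hanti : IsAntichain (· ≤ ·) (minExps (intCl I)) := by
    intro a ha b hb hne hle
    exact hne (hb.2 a ha.1 hle)
  exact Set.ncard_le_ncard hsub (hanti.finite_of_partiallyWellOrderedOn (Set.isPWO_of_wellQuasiOrderedLE _))
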